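/- arXiv:math/0101103 — 2 statements merged into one kernel-verified Lean document; each statement's English description precedes it below -/
import Mathlib

section
/- For every open set V ⊆ ℝⁿ there exist a natural number m and open sets U₁, …, U_m contained in V with V = U₁ ∪ ⋯ ∪ U_m, such that each U_i is the union of a family of pairwise disjoint open axis-parallel cubes. (This is the decomposition, derived from Whitney's lemma, used in the proof of Theorem 2.1.) -/
/-- An open axis-parallel cube in `ℝⁿ`: a product of intervals `(a j, a j + s)` with a common
side length `s > 0`. -/
def IsOpenCube {n : ℕ} (c : Set (Fin n → ℝ)) : Prop :=
  ∃ (a : Fin n → ℝ) (s : ℝ), 0 < s ∧ c = Set.univ.pi fun j => Set.Ioo (a j) (a j + s)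


namespace WhitneyAux

variable {n : ℕ}

noncomputable def off (b : Bool) : ℝ := if b then 1/2 else 0

noncomputable def gcube (k : ℤ) (o : Fin n → Bool) (m : Fin n → ℤ) : Set (Fin n → ℝ) :=
  Set.univ.pi fun j => Set.Ioo ((2:ℝ)^(k-1) * (m j + off (o j)))
    ((2:ℝ)^(k-1) * (m j + off (o j)) + (2:ℝ)^(k-1))

lemma mem_gcube {k : ℤ} {o : Fin n → Bool} {m : Fin n → ℤ} {x : Fin n → ℝ} :
    x ∈ gcube k o m ↔ ∀ j, (2:ℝ)^(k-1) * (m j + off (o j)) < x j ∧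
      x j < (2:ℝ)^(k-1) * (m j + off (o j)) + (2:ℝ)^(k-1) := by
  simp [gcube, Set.mem_univ_pi]

lemma gcube_isOpenCube (k : ℤ) (o : Fin n → Bool) (m : Fin n → ℤ) :
    IsOpenCube (gcube k o m) :=
  ⟨_, (2:ℝ)^(k-1), zpow_pos two_pos _, rfl⟩

lemma gcube_disjoint {k : ℤ} {o : Fin n → Bool} {m m' : Fin n → ℤ} (h : m ≠ m') :
    Disjoint (gcube k o m) (gcube (n := n) k o m') := by
  rw [Set.disjoint_left]
  intro y hy hy'
  obtain ⟨j, hj⟩ := Function.ne_iff.mp h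
  have t0 : (0:ℝ) < 2^(k-1) := zpow_pos two_pos _
  have h1 := (mem_gcube.mp hy) j
  have h2 := (mem_gcube.mp hy') j
  rcases lt_or_gt_of_ne hj with hlt | hlt
  · have : (m j : ℝ) + 1 ≤ m' j := by exact_mod_cast hlt
    nlinarith [h1.1, h1.2, h2.1, h2.2]
  · have : (m' j : ℝ) + 1 ≤ m j := by exact_mod_cast hlt
    nlinarith [h1.1, h1.2, h2.1, h2.2]

/-- main shell construction -/
lemma main (V : Set (Fin n → ℝ)) (d : (Fin n → ℝ) → ℝ)
    (hLip : ∀ x y, d x ≤ d y + dist x y)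
    (hsub : ∀ x, 0 < d x → x ∈ V) :
    ∃ (U : ZMod 3 × (Fin n → Bool) → Set (Fin n → ℝ)),
      (∀ i, U i ⊆ V) ∧ (∀ x, 0 < d x → x ∈ ⋃ i, U i) ∧
      ∀ i, ∃ F : Set (Set (Fin n → ℝ)),
        (∀ c ∈ F, IsOpenCube c) ∧ F.PairwiseDisjoint id ∧ U i = ⋃₀ F := by
  classical
  set D : ℤ → Set (Fin n → ℝ) := fun k => {x | (2:ℝ)^(k-1) < d x ∧ d x < 2^(k+2)} with hD
  set F : ZMod 3 × (Fin n → Bool) → Set (Set (Fin n → ℝ)) := fun i =>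
    {c | ∃ (k : ℤ) (m : Fin n → ℤ), (k : ZMod 3) = i.1 ∧ c = gcube k i.2 m ∧ c ⊆ D k}
    with hF
  have hDV : ∀ k, D k ⊆ V := by
    intro k x hx
    exact hsub x (lt_trans (zpow_pos two_pos _) hx.1)
  have hDdisj : ∀ k k' : ℤ, k + 3 ≤ k' → Disjoint (D k) (D k') := by
    intro k k' hkk'
    rw [Set.disjoint_left]
    rintro x ⟨_, h2⟩ ⟨h3, _⟩
    have : (2:ℝ)^(k+2) ≤ 2^(k'-1) := zpow_le_zpow_right₀ one_le_two (by omega)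
    linarith
  refine ⟨fun i => ⋃₀ F i, ?_, ?_, ?_⟩
  · rintro i x ⟨c, ⟨k, m, _, _, hcD⟩, hxc⟩
    exact hDV k (hcD hxc)
  · intro x hx
    obtain ⟨k, hk1, hk2⟩ := exists_mem_Ioc_zpow hx (one_lt_two (α := ℝ))
    set t : ℝ := (2:ℝ)^(k-1) with ht
    have t0 : (0:ℝ) < t := zpow_pos two_pos _
    have h2k : (2:ℝ)^k = t * 2 := by
      rw [ht, ← zpow_add_one₀ (two_ne_zero (α := ℝ))]; ring_nf
    have h2k1 : (2:ℝ)^(k+1) = t * 4 := by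
      rw [ht, show k+1 = k-1+2 by ring, zpow_add₀ (two_ne_zero (α := ℝ))]; norm_num
    have h2k2 : (2:ℝ)^(k+2) = t * 8 := by
      rw [ht, show k+2 = k-1+3 by ring, zpow_add₀ (two_ne_zero (α := ℝ))]; norm_num
    -- choose offsets
    set o : Fin n → Bool := fun j => if ∃ m : ℤ, x j = t * m then true else false with ho
    have hno : ∀ j, ∀ m : ℤ, x j ≠ t * (m + off (o j)) := by
      intro j m hm
      by_cases hc : ∃ m : ℤ, x j = t * m
      · have : o j = true := by simp [ho, hc]
        rw [this] at hm
        obtain ⟨m', hm'⟩ := hc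
        have he : (m' : ℝ) = (m : ℝ) + off true :=
          mul_left_cancel₀ (ne_of_gt t0) (hm'.symm.trans hm)
        have h2 : ((2 * m' : ℤ) : ℝ) = ((2 * m + 1 : ℤ) : ℝ) := by
          push_cast; simp [off] at he; linarith
        have := Int.cast_injective (α := ℝ) h2
        omega
      · have : o j = false := by simp [ho]; exact fun m hmm => hc ⟨m, hmm⟩
        rw [this] at hm
        simp [off] at hm
        exact hc ⟨m, by rw [hm]⟩
    set mm : Fin n → ℤ := fun j => ⌊x j / t - off (o j)⌋ with hmm
    have hxmem : x ∈ gcube k o mm := by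
      rw [mem_gcube]
      intro j
      set u : ℝ := x j / t - off (o j) with hu
      have hfloor_ne : (⌊u⌋ : ℝ) ≠ u := by
        intro hfe
        apply hno j ⌊u⌋
        have : x j / t = ⌊u⌋ + off (o j) := by rw [hfe]; ring
        field_simp at this; linarith [this]
      constructor
      · have h1 : (⌊u⌋ : ℝ) < u := (Int.floor_le u).lt_of_ne hfloor_ne
        have : (mm j : ℝ) + off (o j) < x j / t := by
          have : (mm j : ℝ) < u := h1
          rw [hu] at this; linarith
        calc t * (mm j + off (o j)) < t * (x j / t) := by
              exact (mul_lt_mul_iff_right₀ t0).mpr this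
          _ = x j := by field_simp
      · have h1 : u < (⌊u⌋ : ℝ) + 1 := Int.lt_floor_add_one u
        have : x j / t < (mm j + off (o j)) + 1 := by
          have : u < (mm j : ℝ) + 1 := h1
          rw [hu] at this; linarith
        calc x j = t * (x j / t) := by field_simp
          _ < t * ((mm j + off (o j)) + 1) := (mul_lt_mul_iff_right₀ t0).mpr this
          _ = t * (mm j + off (o j)) + t := by ring
    have hsubD : gcube k o mm ⊆ D k := by
      intro y hy
      have hdist : dist y x ≤ t := by
        rw [dist_pi_le_iff t0.le]
        intro j
        have h1 := (mem_gcube.mp hy) j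
        have h2 := (mem_gcube.mp hxmem) j
        rw [Real.dist_eq, abs_sub_le_iff]
        constructor <;> linarith
      have l1 : d x ≤ d y + dist x y := hLip x y
      have l2 : d y ≤ d x + dist y x := hLip y x
      rw [dist_comm] at l1
      constructor
      · rw [← ht]; rw [h2k] at hk1; linarith
      · rw [h2k2]; rw [h2k1] at hk2; linarith
    exact Set.mem_iUnion.mpr ⟨((k : ZMod 3), o), Set.mem_sUnion.mpr
      ⟨gcube k o mm, ⟨k, mm, rfl, rfl, hsubD⟩, hxmem⟩⟩
  · rintro ⟨r, o⟩
    refine ⟨F (r, o), ?_, ?_, rfl⟩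
    · rintro c ⟨k, m, _, rfl, _⟩
      exact gcube_isOpenCube k o m
    · rintro c ⟨k, m, hk, rfl, hcD⟩ c' ⟨k', m', hk', rfl, hcD'⟩ hne
      rcases eq_or_ne k k' with hkk | hkk
      · subst hkk
        have hmne : m ≠ m' := by rintro rfl; exact hne rfl
        exact gcube_disjoint hmne
      · have h3 : (3:ℤ) ∣ k' - k := by
          have : (k : ZMod 3) = (k' : ZMod 3) := hk.trans hk'.symm
          have := (ZMod.intCast_eq_intCast_iff' k k' 3).mp this
          omega
        rcases lt_or_gt_of_ne hkk with hlt | hlt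
        · have : k + 3 ≤ k' := by omega
          exact Set.disjoint_of_subset hcD hcD' (hDdisj k k' this)
        · have : k' + 3 ≤ k := by omega
          exact (Set.disjoint_of_subset hcD' hcD (hDdisj k' k this)).symm

end WhitneyAux


/-- Every open set `V ⊆ ℝⁿ` is the union of finitely many open subsets `U₁, …, U_m` of `V`,
each of which is a union of a pairwise disjoint family of open axis-parallel cubes
(the Whitney-type decomposition used in the proof of Theorem 2.1). -/
theorem exists_whitney_decomposition {n : ℕ} (V : Set (Fin n → ℝ)) (hV : IsOpen V) :
    ∃ (m : ℕ) (U : Fin m → Set (Fin n → ℝ)),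
      (∀ i, U i ⊆ V) ∧ V = ⋃ i, U i ∧
      ∀ i, ∃ F : Set (Set (Fin n → ℝ)),
        (∀ c ∈ F, IsOpenCube c) ∧ F.PairwiseDisjoint id ∧ U i = ⋃₀ F := by
  classical
  by_cases hVc : V = Set.univ
  · subst hVc
    have hd : ∀ x y : Fin n → ℝ, dist x 0 ≤ dist y 0 + dist x y := by
      intro x y
      linarith [dist_triangle x y (0 : Fin n → ℝ)]
    obtain ⟨U, hU1, hU2, hU3⟩ := WhitneyAux.main Set.univ (fun x => dist x 0)
      hd (fun x _ => Set.mem_univ x)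
    set c₀ : Set (Fin n → ℝ) := Set.univ.pi fun _ => Set.Ioo (-1 : ℝ) ((-1) + 2) with hc₀
    let e := Fintype.equivFin (ZMod 3 × (Fin n → Bool))
    refine ⟨Fintype.card (ZMod 3 × (Fin n → Bool)) + 1,
      Fin.cons c₀ (fun i => U (e.symm i)), fun _ => Set.subset_univ _, ?_, ?_⟩
    · apply Set.eq_of_subset_of_subset _ (Set.subset_univ _)
      intro x _
      by_cases hx0 : x = 0
      · refine Set.mem_iUnion.mpr ⟨0, ?_⟩
        rw [Fin.cons_zero, hc₀]
        intro j _
        subst hx0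
        constructor <;> norm_num
      · have := hU2 x (dist_pos.mpr hx0)
        obtain ⟨i, hi⟩ := Set.mem_iUnion.mp this
        exact Set.mem_iUnion.mpr ⟨(e i).succ, by simpa [Fin.cons_succ] using hi⟩
    · intro i
      refine Fin.cases ?_ ?_ i
      · refine ⟨{c₀}, ?_, Set.pairwiseDisjoint_singleton _ _, by
          rw [Fin.cons_zero, Set.sUnion_singleton]⟩
        rintro c rfl
        exact ⟨fun _ => -1, 2, two_pos, rfl⟩
      · intro j
        simpa [Fin.cons_succ] using hU3 (e.symm j)
  · have hne : Vᶜ.Nonempty := Set.nonempty_compl.mpr hVc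
    obtain ⟨U, hU1, hU2, hU3⟩ := WhitneyAux.main V (fun x => Metric.infDist x Vᶜ)
      (fun x y => Metric.infDist_le_infDist_add_dist)
      (fun x hx => by
        by_contra hxV
        beta_reduce at hx
        rw [Metric.infDist_zero_of_mem (Set.mem_compl hxV)] at hx
        exact lt_irrefl 0 hx)
    let e := Fintype.equivFin (ZMod 3 × (Fin n → Bool))
    refine ⟨Fintype.card (ZMod 3 × (Fin n → Bool)), fun i => U (e.symm i),
      fun i => hU1 _, ?_, fun i => hU3 _⟩
    rw [e.symm.surjective.iUnion_comp U]
    apply Set.eq_of_subset_of_subset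
    · intro x hx
      have hpos : 0 < Metric.infDist x Vᶜ :=
        (hV.isClosed_compl.notMem_iff_infDist_pos hne).mp (by simpa using hx)
      exact hU2 x hpos
    · exact Set.iUnion_subset hU1
end

section
/- Every holomorphic map from the punctured plane to the punctured unit disc is constant: if f : ℂ → ℂ is complex-differentiable on {z : ℂ | z ≠ 0} and satisfies f(z) ∈ {w : ℂ | ‖w‖ < 1 ∧ w ≠ 0} for all z ≠ 0, then there is a constant c with f(z) = c for all z ≠ 0. (This is the paper's claim, via Liouville's theorem and removable singularities, that 𝒪(ℂ^×, 𝔻^×) = 𝔻^×.) -/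
open Function Filter Set Topology

/-- Every holomorphic map from the punctured plane to the punctured unit disc is constant:
`𝒪(ℂ^×, 𝔻^×) = 𝔻^×` (via Liouville's theorem and removable singularities). -/
theorem holomorphic_puncturedPlane_to_puncturedDisc_constant (f : ℂ → ℂ)
    (hf : DifferentiableOn ℂ f {z : ℂ | z ≠ 0})
    (hmap : ∀ z : ℂ, z ≠ 0 → ‖f z‖ < 1 ∧ f z ≠ 0) :
    ∃ c : ℂ, ∀ z : ℂ, z ≠ 0 → f z = c := by
  set g : ℂ → ℂ := Function.update f 0 (limUnder (𝓝[≠] (0:ℂ)) f) with hg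
  have hset : (Set.univ \ {(0:ℂ)}) = {z : ℂ | z ≠ 0} := by ext z; simp
  have hdg : DifferentiableOn ℂ g Set.univ := by
    apply Complex.differentiableOn_update_limUnder_of_bddAbove (s := Set.univ) univ_mem
    · rw [hset]; exact hf
    · refine ⟨1, fun x hx => ?_⟩
      obtain ⟨z, hz, rfl⟩ := hx
      exact (hmap z (by simpa using hz.2)).1.le
  have hdg' : Differentiable ℂ g := fun z => (hdg z (mem_univ z)).differentiableAt univ_mem
  have hb : ∀ z : ℂ, ‖g z‖ ≤ 1 := by
    intro z
    rcases eq_or_ne z 0 with rfl | hz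
    · have ht : Tendsto g (𝓝[≠] (0:ℂ)) (𝓝 (g 0)) :=
        (hdg'.continuous.tendsto 0).mono_left nhdsWithin_le_nhds
      refine le_of_tendsto (ht.norm) ?_
      filter_upwards [self_mem_nhdsWithin] with w hw
      simp only [hg, Function.update_of_ne hw]
      exact (hmap w hw).1.le
    · simp only [hg, Function.update_of_ne hz]
      exact (hmap z hz).1.le
  have hconst := hdg'.exists_const_forall_eq_of_bounded
    (Metric.isBounded_range_iff.2 ⟨2, fun x y => by
      calc dist (g x) (g y) ≤ ‖g x‖ + ‖g y‖ := dist_le_norm_add_norm _ _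
      _ ≤ 2 := by linarith [hb x, hb y]⟩)
  obtain ⟨c, hc⟩ := hconst
  refine ⟨c, fun z hz => ?_⟩
  have := hc z
  rwa [hg, Function.update_of_ne hz] at this
end
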